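/- Let R be a tournament on branches of T_max induced level-wise from tournaments R_t on immediate successors of nodes t, i.e., R(x,y) iff R_{x∩y}(x↾(|x∩y|+1), y↾(|x∩y|+1)). Let u₀, u₂, u₄ be distinct branches with R(u₀,u₂), R(u₂,u₄) and R(u₄,u₀). Then u₀∩u₂ = u₂∩u₄ = u₀∩u₄, i.e., the three branches have a common meet. -/
import Mathlib


/-- The position of first difference of two infinite sequences:
the length of their longest common initial segment. -/
noncomputable def meetLen (x y : ℕ → ℕ) : ℕ := sInf {n | x n ≠ y n}

/-- The initial segment of `x` of length `n`, as a finite sequence (list). -/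
def restrict (x : ℕ → ℕ) (n : ℕ) : List ℕ := (List.range n).map x

/-- The meet `x ∩ y`: the longest common initial segment of distinct sequences. -/
noncomputable def meet (x y : ℕ → ℕ) : List ℕ := restrict x (meetLen x y)

lemma meetSet_nonempty {x y : ℕ → ℕ} (h : x ≠ y) : {n | x n ≠ y n}.Nonempty := by
  rcases Function.ne_iff.mp h with ⟨n, hn⟩
  exact ⟨n, hn⟩

lemma meetLen_ne {x y : ℕ → ℕ} (h : x ≠ y) : x (meetLen x y) ≠ y (meetLen x y) :=
  Nat.sInf_mem (meetSet_nonempty h)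

lemma meetLen_agree {x y : ℕ → ℕ} {n : ℕ} (hn : n < meetLen x y) : x n = y n := by
  by_contra hne
  exact absurd (Nat.sInf_le hne) (not_le.mpr hn)

lemma meetLen_comm (x y : ℕ → ℕ) : meetLen x y = meetLen y x := by
  unfold meetLen
  congr 1
  ext n
  exact ne_comm

lemma restrict_congr {x y : ℕ → ℕ} {k : ℕ} (h : ∀ n < k, x n = y n) :
    restrict x k = restrict y k := by
  unfold restrict
  apply List.map_congr_left
  intro a ha
  exact h a (List.mem_range.mp ha)

lemma restrict_succ (x : ℕ → ℕ) (n : ℕ) :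
    restrict x (n + 1) = restrict x n ++ [x n] := by
  simp [restrict, List.range_succ]

/-- For a tournament on branches induced level-wise, a cyclically oriented
triple `R(u₀,u₂), R(u₂,u₄), R(u₄,u₀)` has a common meet. -/
theorem tournament_cycle_common_meet (T : Set (List ℕ))
    (hdc : ∀ s t : List ℕ, s <+: t → t ∈ T → s ∈ T)
    (hfb : ∀ t ∈ T, {a : ℕ | t ++ [a] ∈ T}.Finite)
    (hnt : ∀ t ∈ T, ∃ a : ℕ, t ++ [a] ∈ T)
    (Rt : List ℕ → List ℕ → List ℕ → Prop)
    (htour : ∀ t ∈ T, ∀ a b : ℕ, t ++ [a] ∈ T → t ++ [b] ∈ T → a ≠ b →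
      Xor' (Rt t (t ++ [a]) (t ++ [b])) (Rt t (t ++ [b]) (t ++ [a])))
    (R : (ℕ → ℕ) → (ℕ → ℕ) → Prop)
    (hR : ∀ a b : ℕ → ℕ, a ≠ b →
      (R a b ↔ Rt (meet a b) (restrict a (meetLen a b + 1)) (restrict b (meetLen a b + 1))))
    (u₀ u₂ u₄ : ℕ → ℕ)
    (h0 : ∀ n : ℕ, restrict u₀ n ∈ T) (h2 : ∀ n : ℕ, restrict u₂ n ∈ T)
    (h4 : ∀ n : ℕ, restrict u₄ n ∈ T)
    (h02 : u₀ ≠ u₂) (h04 : u₀ ≠ u₄) (h24 : u₂ ≠ u₄)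
    (hR02 : R u₀ u₂) (hR24 : R u₂ u₄) (hR40 : R u₄ u₀) :
    meet u₀ u₂ = meet u₂ u₄ ∧ meet u₀ u₂ = meet u₀ u₄ := by
  -- no 2-cycles
  have key : ∀ x y : ℕ → ℕ, (∀ n, restrict x n ∈ T) → (∀ n, restrict y n ∈ T) → x ≠ y →
      R x y → R y x → False := by
    intro x y hx hy hxy rxy ryx
    set m := meetLen x y with hm
    have hmc : meetLen y x = m := (meetLen_comm y x)
    have hagree : restrict y m = restrict x m :=
      restrict_congr (fun n hn => (meetLen_agree hn).symm)
    have h1 : Rt (restrict x m) (restrict x (m + 1)) (restrict y (m + 1)) := by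
      have := (hR x y hxy).mp rxy
      simpa [meet] using this
    have h2' : Rt (restrict x m) (restrict y (m + 1)) (restrict x (m + 1)) := by
      have := (hR y x hxy.symm).mp ryx
      simpa [meet, hmc, hagree] using this
    have hxm : restrict x m ++ [x m] ∈ T := by rw [← restrict_succ]; exact hx (m + 1)
    have hym : restrict x m ++ [y m] ∈ T := by
      rw [← hagree, ← restrict_succ]; exact hy (m + 1)
    have hxor := htour (restrict x m) (hx m) (x m) (y m) hxm hym (meetLen_ne hxy)
    have e1 : restrict x m ++ [x m] = restrict x (m + 1) := (restrict_succ x m).symm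
    have e2 : restrict x m ++ [y m] = restrict y (m + 1) := by
      rw [restrict_succ, hagree]
    rw [e1, e2] at hxor
    rcases hxor with ⟨_, hn⟩ | ⟨_, hn⟩
    · exact hn h2'
    · exact hn h1
  -- shifting lemma: if x splits from y before y splits from z, then R x y ↔ R x z
  have shift : ∀ x y z : ℕ → ℕ, x ≠ y → x ≠ z → y ≠ z →
      meetLen x y < meetLen y z → (R x y ↔ R x z) := by
    intro x y z hxy hxz hyz hlt
    have hmem : x (meetLen x y) ≠ z (meetLen x y) := by
      rw [← meetLen_agree hlt]
      exact meetLen_ne hxy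
    have hlen : meetLen x z = meetLen x y := by
      apply le_antisymm (Nat.sInf_le hmem)
      by_contra hc
      push_neg at hc
      exact meetLen_ne hxz ((meetLen_agree hc).trans (meetLen_agree (lt_trans hc hlt)))
    have hrz : restrict z (meetLen x y + 1) = restrict y (meetLen x y + 1) :=
      restrict_congr fun n hn => (meetLen_agree (lt_of_lt_of_le hn hlt)).symm
    have hmeet : meet x z = meet x y := by unfold meet; rw [hlen]
    rw [hR x y hxy, hR x z hxz, hlen, hrz, hmeet]
  -- the three meet lengths are equal
  have c20 : meetLen u₂ u₀ = meetLen u₀ u₂ := meetLen_comm u₂ u₀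
  have c40 : meetLen u₄ u₀ = meetLen u₀ u₄ := meetLen_comm u₄ u₀
  have c42 : meetLen u₄ u₂ = meetLen u₂ u₄ := meetLen_comm u₄ u₂
  have hab : meetLen u₀ u₂ = meetLen u₂ u₄ := by
    rcases lt_trichotomy (meetLen u₀ u₂) (meetLen u₂ u₄) with h | h | h
    · exact absurd (((shift u₀ u₂ u₄ h02 h04 h24 h).mp hR02))
        (fun hr => key u₀ u₄ h0 h4 h04 hr hR40)
    · exact h
    · have h' : meetLen u₄ u₂ < meetLen u₂ u₀ := by rw [c42, c20]; exact h
      have := (shift u₄ u₂ u₀ (Ne.symm h24) (Ne.symm h04) (Ne.symm h02) h').mpr hR40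
      exact absurd hR24 (fun hr => key u₂ u₄ h2 h4 h24 hr this)
  have hac : meetLen u₀ u₂ = meetLen u₀ u₄ := by
    rcases lt_trichotomy (meetLen u₀ u₂) (meetLen u₀ u₄) with h | h | h
    · have h' : meetLen u₂ u₀ < meetLen u₀ u₄ := by rw [c20]; exact h
      have := (shift u₂ u₀ u₄ (Ne.symm h02) h24 h04 h').mpr hR24
      exact absurd hR02 (fun hr => key u₀ u₂ h0 h2 h02 hr this)
    · exact h
    · have h' : meetLen u₄ u₀ < meetLen u₀ u₂ := by rw [c40]; exact h
      have := (shift u₄ u₀ u₂ (Ne.symm h04) (Ne.symm h24) h02 h').mp hR40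
      exact absurd hR24 (fun hr => key u₂ u₄ h2 h4 h24 hr this)
  constructor
  · show restrict u₀ (meetLen u₀ u₂) = restrict u₂ (meetLen u₂ u₄)
    rw [← hab]
    exact restrict_congr (fun n hn => meetLen_agree hn)
  · show restrict u₀ (meetLen u₀ u₂) = restrict u₀ (meetLen u₀ u₄)
    rw [hac]
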